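/- For nonnegative integers k_p, k_s and erasure probabilities 0 ≤ p₂, p₂₁, p₁₂ < 1, the conditional expected retransmission count of the SNC scheme, E[B₃^S | L_p=k_p, L_s=k_s], is at most k_p/(1-p₂₁) + k_s/(1-p₂). -/

import Mathlib

lemma binom_sum_one (n : ℕ) (p : ℝ) :
    ∑ i ∈ Finset.range (n + 1), (n.choose i : ℝ) * (1 - p) ^ i * p ^ (n - i) = 1 := by
  have h := add_pow (1 - p) p n
  simp only [sub_add_cancel, one_pow] at h
  conv_rhs => rw [h]
  congr 1
  ext i
  ring

/-- The conditional expected retransmission count of the SNC scheme is at most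
the conventional-ARQ cost `k_p/(1-p₂₁) + k_s/(1-p₂)`. -/
theorem snc_conditional_expectation_upper_bound (kp ks : ℕ) (p₂ p₂₁ p₁₂ : ℝ)
    (h₂0 : 0 ≤ p₂) (h₂1 : p₂ < 1) (h₂₁0 : 0 ≤ p₂₁) (h₂₁1 : p₂₁ < 1)
    (h₁₂0 : 0 ≤ p₁₂) (h₁₂1 : p₁₂ < 1) :
    ∑ i ∈ Finset.range (kp + 1), ∑ j ∈ Finset.range (ks + 1),
        (kp.choose i : ℝ) * (1 - p₁₂) ^ i * p₁₂ ^ (kp - i)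
          * ((ks.choose j : ℝ) * (1 - p₂₁) ^ j * p₂₁ ^ (ks - j))
          * ((min i j : ℝ) * (1 / (1 - p₂₁) + 1 / (1 - p₂) - 1 / (1 - p₂ * p₂₁))
              + ((kp : ℝ) - min i j) / (1 - p₂₁) + ((ks : ℝ) - min i j) / (1 - p₂))
    ≤ (kp : ℝ) / (1 - p₂₁) + (ks : ℝ) / (1 - p₂) := by
  set C : ℝ := (kp : ℝ) / (1 - p₂₁) + (ks : ℝ) / (1 - p₂) with hC
  have hq : p₂ * p₂₁ < 1 := by nlinarith
  have hqc : 0 < 1 - p₂ * p₂₁ := by linarith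
  have step1 :
      ∑ i ∈ Finset.range (kp + 1), ∑ j ∈ Finset.range (ks + 1),
        (kp.choose i : ℝ) * (1 - p₁₂) ^ i * p₁₂ ^ (kp - i)
          * ((ks.choose j : ℝ) * (1 - p₂₁) ^ j * p₂₁ ^ (ks - j))
          * ((min i j : ℝ) * (1 / (1 - p₂₁) + 1 / (1 - p₂) - 1 / (1 - p₂ * p₂₁))
              + ((kp : ℝ) - min i j) / (1 - p₂₁) + ((ks : ℝ) - min i j) / (1 - p₂))
      ≤ ∑ i ∈ Finset.range (kp + 1), ∑ j ∈ Finset.range (ks + 1),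
        (kp.choose i : ℝ) * (1 - p₁₂) ^ i * p₁₂ ^ (kp - i)
          * ((ks.choose j : ℝ) * (1 - p₂₁) ^ j * p₂₁ ^ (ks - j)) * C := by
    apply Finset.sum_le_sum
    intro i _
    apply Finset.sum_le_sum
    intro j _
    have hw : 0 ≤ (kp.choose i : ℝ) * (1 - p₁₂) ^ i * p₁₂ ^ (kp - i)
        * ((ks.choose j : ℝ) * (1 - p₂₁) ^ j * p₂₁ ^ (ks - j)) := by
      have h1 : (0:ℝ) ≤ 1 - p₁₂ := by linarith
      have h2 : (0:ℝ) ≤ 1 - p₂₁ := by linarith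
      positivity
    apply mul_le_mul_of_nonneg_left _ hw
    have hmin : (0:ℝ) ≤ (min i j : ℝ) := by positivity
    have hinner :
        (min i j : ℝ) * (1 / (1 - p₂₁) + 1 / (1 - p₂) - 1 / (1 - p₂ * p₂₁))
          + ((kp : ℝ) - min i j) / (1 - p₂₁) + ((ks : ℝ) - min i j) / (1 - p₂)
        = C - (min i j : ℝ) / (1 - p₂ * p₂₁) := by
      field_simp
      rw [hC, Nat.cast_min]
      ring
    rw [hinner]
    have : (0:ℝ) ≤ (min i j : ℝ) / (1 - p₂ * p₂₁) := by positivity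
    linarith
  refine step1.trans ?_
  have : ∀ i, ∑ j ∈ Finset.range (ks + 1),
      (kp.choose i : ℝ) * (1 - p₁₂) ^ i * p₁₂ ^ (kp - i)
        * ((ks.choose j : ℝ) * (1 - p₂₁) ^ j * p₂₁ ^ (ks - j)) * C
      = (kp.choose i : ℝ) * (1 - p₁₂) ^ i * p₁₂ ^ (kp - i) * C := by
    intro i
    rw [← Finset.sum_mul, ← Finset.mul_sum, binom_sum_one, mul_one]
  simp only [this]
  rw [← Finset.sum_mul, binom_sum_one, one_mul]
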